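/- Let U = {z_1,…,z_n} be a universe, let S_1,…,S_t be subsets of U, and let k be an integer with 3 < k ≤ t. For each i ∈ [n] let f_i = |{j ∈ [t] : z_i ∈ S_j}|, and assume t − f_i − k > 3k for every i ∈ [n]. Fix the candidate set C = {x_1,…,x_n, y}. Let G_1,…,G_t and H be profiles over C such that: for each j ∈ [t] and i ∈ [n], D_{G_j}(y, x_i) = 2 if z_i ∉ S_j and D_{G_j}(y, x_i) = 0 otherwise, with D_{G_j}(x_i, x_ℓ) = 0 for all distinct i, ℓ ∈ [n]; and D_H(x_i, y) = 2(t − f_i − k) for every i ∈ [n], with D_H(x_i, x_ℓ) = 0 for all distinct i, ℓ ∈ [n] (such profiles exist). Then the Optimal Defense instance (C, {G_1,…,G_t, H}, k_a = k, k_d = t − k) for the Condorcet voting rule is a Yes instance if and only if there exists an index set I ⊆ [t] with |I| = k and ⋃_{j∈I} S_j = U (i.e., the Set Cover instance (U, {S_1,…,S_t}, k) is a Yes instance). -/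

import Mathlib

open Finset

/-- A vote over a candidate set `C` with `m` candidates: a ranking assigning each
candidate its position. -/
abbrev Vote (C : Type*) (m : ℕ) := C ≃ Fin m

/-- The score of candidate `x` in profile `P` under score vector `α`. -/
def score {C : Type*} {m : ℕ} (α : Fin m → ℝ) (P : Multiset (Vote C m)) (x : C) : ℝ :=
  (P.map fun v => α (v x)).sum

/-- The scoring rule of `α`: the set of candidates with maximum score. -/
def scoringRule {C : Type*} {m : ℕ} (α : Fin m → ℝ) (P : Multiset (Vote C m)) : Set C :=
  {x | ∀ y, score α P y ≤ score α P x}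

/-- `margin P x y`: number of votes preferring `x` to `y` minus those preferring `y` to `x`. -/
def margin {C : Type*} {m : ℕ} (P : Multiset (Vote C m)) (x y : C) : ℤ :=
  ((P.filter fun v => v x < v y).card : ℤ) - ((P.filter fun v => v y < v x).card : ℤ)

/-- `c` is the Condorcet winner of `P`. -/
def CondorcetWinner {C : Type*} {m : ℕ} (P : Multiset (Vote C m)) (c : C) : Prop :=
  ∀ y, y ≠ c → 0 < margin P c y

/-- The Condorcet voting rule: `{c}` if a Condorcet winner `c` exists, all candidates otherwise. -/
def condorcetRule {C : Type*} {m : ℕ} (P : Multiset (Vote C m)) : Set C :=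
  {x | CondorcetWinner P x ∨ ¬ ∃ c, CondorcetWinner P c}

/-- `α` is monotone nonincreasing (part of being a score vector). -/
def IsMonotoneScore {m : ℕ} (α : Fin m → ℝ) : Prop :=
  ∀ i j : Fin m, i ≤ j → α j ≤ α i

/-- `α` is normalized: some consecutive difference is `1` and all later entries are `0`. -/
def IsNormalized {m : ℕ} (α : Fin m → ℝ) : Prop :=
  ∃ j : ℕ, ∃ hj : j + 1 < m, α ⟨j, Nat.lt_of_succ_lt hj⟩ - α ⟨j + 1, hj⟩ = 1 ∧
    ∀ ℓ : Fin m, j < (ℓ : ℕ) → α ℓ = 0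

/-- `Q` is a profile `P_u^v`: it has `m` votes and
`s_Q(u) + 1 = s_Q(v) - 1 = s_Q(z)` for every `z ∉ {u, v}`. -/
def PfGood {C : Type*} {m : ℕ} (α : Fin m → ℝ) (Q : Multiset (Vote C m)) (u v : C) : Prop :=
  Multiset.card Q = m ∧ score α Q u + 1 = score α Q v - 1 ∧
    ∀ z : C, z ≠ u → z ≠ v → score α Q z = score α Q v - 1

/-- The Optimal Defense instance with groups `G`, attacker resource `ka` and defender
resource `kd` is a Yes instance for voting rule `r`. -/
def DefenseYes {C : Type*} {m N : ℕ} (r : Multiset (Vote C m) → Set C)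
    (G : Fin N → Multiset (Vote C m)) (ka kd : ℕ) : Prop :=
  ∃ I : Finset (Fin N), I.card ≤ kd ∧
    ∀ I' : Finset (Fin N), Disjoint I I' → I'.card ≤ ka →
      r (∑ i ∈ Finset.univ \ I', G i) = r (∑ i, G i)

/-- The Optimal Attack instance with groups `G`, attacker resource `ka` and defender
resource `kd` is a Yes instance for voting rule `r`. -/
def AttackYes {C : Type*} {m N : ℕ} (r : Multiset (Vote C m) → Set C)
    (G : Fin N → Multiset (Vote C m)) (ka kd : ℕ) : Prop :=
  ∃ I : Finset (Fin N), I.card ≤ ka ∧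
    ∀ I' : Finset (Fin N), I'.card ≤ kd →
      r (∑ i ∈ Finset.univ \ (I \ I'), G i) ≠ r (∑ i, G i)
lemma margin_add {C : Type*} {m : ℕ} (P Q : Multiset (Vote C m)) (u v : C) :
    margin (P + Q) u v = margin P u v + margin Q u v := by
  simp [margin, Multiset.filter_add]; ring

lemma margin_sum {C : Type*} {m : ℕ} {ι : Type*} (s : Finset ι)
    (P : ι → Multiset (Vote C m)) (u v : C) :
    margin (∑ i ∈ s, P i) u v = ∑ i ∈ s, margin (P i) u v := by
  classical
  induction s using Finset.induction_on with
  | empty => simp [margin]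
  | insert a s ha ih => rw [Finset.sum_insert ha, Finset.sum_insert ha, margin_add, ih]

lemma margin_rev {C : Type*} {m : ℕ} (P : Multiset (Vote C m)) (u v : C) :
    margin P u v = - margin P v u := by
  simp [margin]

/-- the Set Cover reduction instance for Optimal Defense under the
Condorcet voting rule. -/
theorem stmt11 (n t : ℕ) (S : Fin t → Finset (Fin n)) (k : ℕ) (hk3 : 3 < k) (hkt : k ≤ t)
    (f : Fin n → ℕ) (hf : ∀ i, f i = (Finset.univ.filter (fun j => i ∈ S j)).card)
    (hbig : ∀ i, 3 * k < t - f i - k)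
    {C : Type} [Fintype C] [DecidableEq C] (hC : Fintype.card C = n + 1)
    (x : Fin n → C) (hxinj : Function.Injective x) (y : C) (hxy : ∀ i, x i ≠ y)
    (G : Fin t → Multiset (Vote C (n + 1))) (H : Multiset (Vote C (n + 1)))
    (hGyx : ∀ j i, margin (G j) y (x i) = if i ∈ S j then 0 else 2)
    (hGxx : ∀ j i l, i ≠ l → margin (G j) (x i) (x l) = 0)
    (hHxy : ∀ i, margin H (x i) y = 2 * ((t - f i - k : ℕ) : ℤ))
    (hHxx : ∀ i l, i ≠ l → margin H (x i) (x l) = 0) :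
    DefenseYes condorcetRule (Fin.snoc G H) k (t - k) ↔
    ∃ I : Finset (Fin t), I.card = k ∧ ∀ u : Fin n, ∃ j ∈ I, u ∈ S j := by
  classical
  set GH : Fin (t + 1) → Multiset (Vote C (n + 1)) := Fin.snoc G H with hGH
  have hfk : ∀ i, f i + k < t := fun i => by have := hbig i; omega
  -- every candidate is y or some x i
  have hsurj : ∀ c : C, c = y ∨ ∃ i, c = x i := by
    intro c
    have hy' : y ∉ Finset.image x Finset.univ := by
      simp only [Finset.mem_image]
      rintro ⟨i, -, hi⟩
      exact hxy i hi
    have huniv : insert y (Finset.image x Finset.univ) = (Finset.univ : Finset C) := by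
      apply Finset.eq_univ_of_card
      rw [Finset.card_insert_of_notMem hy', Finset.card_image_of_injective _ hxinj,
        Finset.card_univ]
      simp [hC]
    have hc : c ∈ insert y (Finset.image x Finset.univ) := huniv ▸ Finset.mem_univ c
    rcases Finset.mem_insert.mp hc with h | h
    · exact Or.inl h
    · obtain ⟨i, -, hi⟩ := Finset.mem_image.mp h
      exact Or.inr ⟨i, hi.symm⟩
  have hGHc : ∀ j : Fin t, GH (Fin.castSucc j) = G j := fun j => by simp [hGH]
  have hGHl : GH (Fin.last t) = H := by simp [hGH]
  have hμc : ∀ (j : Fin t) i, margin (GH (Fin.castSucc j)) y (x i)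
      = if i ∈ S j then 0 else 2 := by
    intro j i; rw [hGHc]; exact hGyx j i
  have hμl : ∀ i, margin (GH (Fin.last t)) y (x i) = -(2 * ((t - f i - k : ℕ) : ℤ)) := by
    intro i; rw [hGHl, margin_rev, hHxy]
  have hcnt : ∀ i : Fin n, ((Finset.univ.filter (fun j => i ∉ S j)).card : ℕ) = t - f i := by
    intro i
    have h1 := Finset.card_filter_add_card_filter_not
      (s := (Finset.univ : Finset (Fin t))) (p := fun j => i ∈ S j)
    rw [Finset.card_univ, Fintype.card_fin] at h1
    have h2 := hf i
    omega
  have hFsplit : ∀ u v : C, margin (∑ a, GH a) u v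
      = (∑ j : Fin t, margin (G j) u v) + margin H u v := by
    intro u v
    rw [margin_sum, Fin.sum_univ_castSucc]
    simp [hGHc, hGHl]
  have hFyx : ∀ i, margin (∑ a, GH a) y (x i) = 2 * k := by
    intro i
    rw [hFsplit]
    have h2 : ∑ j : Fin t, margin (G j) y (x i)
        = 2 * (((Finset.univ.filter (fun j => i ∉ S j)).card : ℕ) : ℤ) := by
      rw [Finset.sum_congr rfl fun j _ => hGyx j i, Finset.sum_ite, Finset.sum_const_zero,
        Finset.sum_const, zero_add, nsmul_eq_mul]
      ring
    rw [h2, hcnt, margin_rev, hHxy]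
    have h3 := hfk i
    omega
  have hFwin : CondorcetWinner (∑ a, GH a) y := by
    intro z hz
    rcases hsurj z with rfl | ⟨i, rfl⟩
    · exact absurd rfl hz
    · rw [hFyx]
      omega
  have hsingle : ∀ (P : Multiset (Vote C (n + 1))) (c : C),
      CondorcetWinner P c → condorcetRule P = {c} := by
    intro P c hc
    ext z
    simp only [condorcetRule, Set.mem_setOf_eq, Set.mem_singleton_iff]
    constructor
    · rintro (hz | hno)
      · by_contra hzc
        have h1 := hz c fun h => hzc h.symm
        have h2 := hc z hzc
        rw [margin_rev] at h1
        omega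
      · exact absurd ⟨c, hc⟩ hno
    · rintro rfl
      exact Or.inl hc
  have hrF : condorcetRule (∑ a, GH a) = {y} := hsingle _ y hFwin
  have hrem : ∀ (I' : Finset (Fin (t + 1))) (u v : C),
      margin (∑ a ∈ Finset.univ \ I', GH a) u v
        = margin (∑ a, GH a) u v - ∑ a ∈ I', margin (GH a) u v := by
    intro I' u v
    have h := Finset.sum_sdiff (f := fun a => margin (GH a) u v) (Finset.subset_univ I')
    rw [margin_sum, margin_sum]
    linarith
  constructor
  · rintro ⟨I, hIcard, hdef⟩
    have hAcard : k ≤ (Finset.univ.filter (fun j : Fin t => Fin.castSucc j ∉ I)).card := by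
      have h1 : (Finset.univ.filter (fun j : Fin t => Fin.castSucc j ∈ I)).card ≤ I.card := by
        apply Finset.card_le_card_of_injOn (fun j => Fin.castSucc j)
        · intro j hj
          exact (Finset.mem_filter.mp hj).2
        · intro a _ b _ hab
          exact Fin.castSucc_injective _ hab
      have h2 := Finset.card_filter_add_card_filter_not
        (s := (Finset.univ : Finset (Fin t))) (p := fun j => Fin.castSucc j ∈ I)
      rw [Finset.card_univ, Fintype.card_fin] at h2
      omega
    have hkey : ∀ i : Fin n,
        ((Finset.univ.filter (fun j : Fin t => Fin.castSucc j ∉ I)).filter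
          (fun j => i ∉ S j)).card < k := by
      intro i
      by_contra hge
      push_neg at hge
      obtain ⟨B, hBsub, hBcard⟩ := Finset.exists_subset_card_eq hge
      have hBprop : ∀ j ∈ B, Fin.castSucc j ∉ I ∧ i ∉ S j := by
        intro j hj
        have h := Finset.mem_filter.mp (hBsub hj)
        exact ⟨(Finset.mem_filter.mp h.1).2, h.2⟩
      have hI'card : (B.image Fin.castSucc).card = k := by
        rw [Finset.card_image_of_injective _ (Fin.castSucc_injective _), hBcard]
      have hdisj : Disjoint I (B.image Fin.castSucc) := by
        rw [Finset.disjoint_right]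
        intro a ha
        obtain ⟨j, hjB, rfl⟩ := Finset.mem_image.mp ha
        exact (hBprop j hjB).1
      have heq := hdef _ hdisj (le_of_eq hI'card)
      rw [hrF] at heq
      have hm : margin (∑ a ∈ Finset.univ \ B.image Fin.castSucc, GH a) y (x i) = 0 := by
        rw [hrem, hFyx,
          Finset.sum_image (fun a _ b _ h => Fin.castSucc_injective _ h),
          Finset.sum_congr rfl (fun j hj => by rw [hμc, if_neg (hBprop j hj).2]),
          Finset.sum_const, hBcard, nsmul_eq_mul]
        ring
      have hyy : y ∈ condorcetRule (∑ a ∈ Finset.univ \ B.image Fin.castSucc, GH a) := by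
        rw [heq]; rfl
      have hxi : x i ∉ condorcetRule (∑ a ∈ Finset.univ \ B.image Fin.castSucc, GH a) := by
        rw [heq]
        exact fun h => hxy i h
      simp only [condorcetRule, Set.mem_setOf_eq] at hyy hxi
      push_neg at hxi
      obtain ⟨hxi1, c, hc⟩ := hxi
      rcases hyy with hwy | hno
      · have := hwy (x i) (hxy i)
        rw [hm] at this
        exact absurd this (lt_irrefl 0)
      · exact hno ⟨c, hc⟩
    obtain ⟨B, hBsub, hBcard⟩ := Finset.exists_subset_card_eq hAcard
    refine ⟨B, hBcard, ?_⟩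
    intro u
    by_contra hno
    push_neg at hno
    have hsub : B ⊆ (Finset.univ.filter (fun j : Fin t => Fin.castSucc j ∉ I)).filter
        (fun j => u ∉ S j) := by
      intro j hj
      exact Finset.mem_filter.mpr ⟨hBsub hj, hno j hj⟩
    have := Finset.card_le_card hsub
    have := hkey u
    omega
  · rintro ⟨I₀, hI₀card, hcover⟩
    refine ⟨(Finset.univ \ I₀).image Fin.castSucc, ?_, ?_⟩
    · rw [Finset.card_image_of_injective _ (Fin.castSucc_injective _),
        Finset.card_sdiff_of_subset (Finset.subset_univ _), Finset.card_univ, Fintype.card_fin, hI₀card]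
    · intro I' hdisj hI'card
      rw [hrF]
      apply hsingle
      intro z hz
      rcases hsurj z with rfl | ⟨i, rfl⟩
      · exact absurd rfl hz
      · have hcs : ∀ j : Fin t, Fin.castSucc j ∈ I' → j ∈ I₀ := by
          intro j hj
          by_contra hjI
          have hmem : Fin.castSucc j ∈ (Finset.univ \ I₀).image Fin.castSucc :=
            Finset.mem_image_of_mem _ (Finset.mem_sdiff.mpr ⟨Finset.mem_univ j, hjI⟩)
          exact (Finset.disjoint_left.mp hdisj hmem) hj
        obtain ⟨j₀, hj₀I₀, hj₀S⟩ := hcover i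
        rw [hrem, hFyx]
        by_cases hlast : Fin.last t ∈ I'
        · have hsum := (Finset.add_sum_erase I' (fun a => margin (GH a) y (x i)) hlast).symm
          have hterm : ∀ a ∈ I'.erase (Fin.last t), margin (GH a) y (x i) ≤ 2 := by
            intro a ha
            obtain ⟨j, rfl⟩ := Fin.exists_castSucc_eq.mpr (Finset.ne_of_mem_erase ha)
            rw [hμc]
            split <;> norm_num
          have hb2 := Finset.sum_le_card_nsmul _ _ _ hterm
          rw [nsmul_eq_mul] at hb2
          have hbc := Finset.card_erase_of_mem hlast
          have hcast : (3 * k : ℤ) < ((t - f i - k : ℕ) : ℤ) := by exact_mod_cast hbig i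
          rw [hsum, hμl]
          omega
        · have hsub : I' ⊆ I₀.image Fin.castSucc := by
            intro a ha
            obtain ⟨j, rfl⟩ := Fin.exists_castSucc_eq.mpr (fun h => hlast (h ▸ ha))
            exact Finset.mem_image_of_mem _ (hcs j ha)
          obtain ⟨J, hJsub, hJeq⟩ := Finset.subset_image_iff.mp hsub
          rw [← hJeq, Finset.sum_image (fun a _ b _ h => Fin.castSucc_injective _ h),
            Finset.sum_congr rfl (fun j _ => hμc j i), Finset.sum_ite, Finset.sum_const_zero,
            Finset.sum_const, zero_add, nsmul_eq_mul]
          have hss : J.filter (fun j => ¬ i ∈ S j) ⊆ I₀.erase j₀ := by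
            intro j hj
            rw [Finset.mem_filter] at hj
            exact Finset.mem_erase.mpr ⟨fun h => hj.2 (h ▸ hj₀S), hJsub hj.1⟩
          have hc1 := Finset.card_le_card hss
          rw [Finset.card_erase_of_mem hj₀I₀, hI₀card] at hc1
          omega
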